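/- Countable stability characterizes the packing dimension of a measure: Let r ∈ [1,∞) and let μ be a Borel probability measure on ℝ^q with compact support. Then dim_P^*(μ) = inf { sup_{i∈ℕ} D̄_r(μ_i) : μ = Σ_{i∈ℕ} s_i μ_i with s_i > 0 and each μ_i a compactly supported Borel probability measure on ℝ^q }. -/

import Mathlib

open MeasureTheory Filter Metric
open scoped ENNReal NNReal

/-- The `n`-th quantization error of order `r` for a measure `P`:
`e_{n,r}(P) = inf { (∫ d(x,α)^r dP)^{1/r} : α ⊆ E, 1 ≤ card α ≤ n }`. -/
noncomputable def quantError {E : Type*} [MetricSpace E] [MeasurableSpace E]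
    (P : Measure E) (r : ℝ) (n : ℕ) : ℝ :=
  sInf {e : ℝ | ∃ α : Finset E, 1 ≤ α.card ∧ α.card ≤ n ∧
    e = (∫ x, infDist x (↑α : Set E) ^ r ∂P) ^ (1 / r)}

/-- The upper quantization dimension of order `r`. -/
noncomputable def upperQuantDim {E : Type*} [MetricSpace E] [MeasurableSpace E]
    (P : Measure E) (r : ℝ) : ℝ :=
  limsup (fun n : ℕ => Real.log n / (- Real.log (quantError P r n))) atTop

/-- The lower quantization dimension of order `r`. -/
noncomputable def lowerQuantDim {E : Type*} [MetricSpace E] [MeasurableSpace E]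
    (P : Measure E) (r : ℝ) : ℝ :=
  liminf (fun n : ℕ => Real.log n / (- Real.log (quantError P r n))) atTop

/-- The `s`-dimensional upper quantization coefficient of order `r`. -/
noncomputable def upperQuantCoeff {E : Type*} [MetricSpace E] [MeasurableSpace E]
    (P : Measure E) (r s : ℝ) : ℝ≥0∞ :=
  limsup (fun n : ℕ => ENNReal.ofReal ((n : ℝ) ^ (1 / s) * quantError P r n)) atTop

/-- The `s`-dimensional lower quantization coefficient of order `r`. -/
noncomputable def lowerQuantCoeff {E : Type*} [MetricSpace E] [MeasurableSpace E]
    (P : Measure E) (r s : ℝ) : ℝ≥0∞ :=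
  liminf (fun n : ℕ => ENNReal.ofReal ((n : ℝ) ^ (1 / s) * quantError P r n)) atTop

/-- The upper quantization dimension of order `r`, as an extended nonnegative real. -/
noncomputable def upperQuantDimE {E : Type*} [MetricSpace E] [MeasurableSpace E]
    (P : Measure E) (r : ℝ) : ℝ≥0∞ :=
  limsup (fun n : ℕ => ENNReal.ofReal (Real.log n / (- Real.log (quantError P r n)))) atTop

/-- `N(A,ε)`: the minimal number of closed balls of radius `ε` needed to cover `A`. -/
noncomputable def coverNum {E : Type*} [MetricSpace E] (A : Set E) (ε : ℝ) : ℕ :=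
  sInf {n : ℕ | ∃ t : Finset E, t.card ≤ n ∧ A ⊆ ⋃ x ∈ t, closedBall x ε}

/-- The upper box dimension `limsup_{ε→0⁺} log N(A,ε)/(-log ε)`, as an extended
nonnegative real. -/
noncomputable def upperBoxDimE {E : Type*} [MetricSpace E] (A : Set E) : ℝ≥0∞ :=
  limsup (fun ε : ℝ => ENNReal.ofReal (Real.log (coverNum A ε) / (- Real.log ε)))
    (nhdsWithin 0 (Set.Ioi 0))

/-- The packing dimension of a set:
`dim_P E = inf { sup_i upperBoxDim (A i) : E ⊆ ⋃ i A i, each A i bounded }`. -/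
noncomputable def packingDim {E : Type*} [MetricSpace E] (F : Set E) : ℝ≥0∞ :=
  sInf {d : ℝ≥0∞ | ∃ A : ℕ → Set E, (∀ i, Bornology.IsBounded (A i)) ∧
    F ⊆ ⋃ i, A i ∧ d = ⨆ i, upperBoxDimE (A i)}

/-- The packing dimension of a measure: `dim_P^* μ = inf { dim_P A : A Borel, μ(A) = 1 }`. -/
noncomputable def packingDimMeasure {E : Type*} [MetricSpace E] [MeasurableSpace E]
    (μ : Measure E) : ℝ≥0∞ :=
  sInf {d : ℝ≥0∞ | ∃ A : Set E, MeasurableSet A ∧ μ A = 1 ∧ d = packingDim A}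


set_option linter.unusedSectionVars false

section Aux
variable {X : Type*} [MetricSpace X] [MeasurableSpace X] [BorelSpace X]

lemma quantErrVal_nonneg (P : Measure X) (r : ℝ) (α : Finset X) :
    0 ≤ (∫ x, infDist x (↑α : Set X) ^ r ∂P) ^ (1 / r) :=
  Real.rpow_nonneg (integral_nonneg fun x => Real.rpow_nonneg infDist_nonneg _) _

lemma quantError_nonneg (P : Measure X) (r : ℝ) (n : ℕ) : 0 ≤ quantError P r n := by
  apply Real.sInf_nonneg
  rintro e ⟨α, -, -, rfl⟩
  exact quantErrVal_nonneg P r α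

lemma quantError_set_nonempty [Nonempty X] (P : Measure X) (r : ℝ) {n : ℕ} (hn : 1 ≤ n) :
    {e : ℝ | ∃ α : Finset X, 1 ≤ α.card ∧ α.card ≤ n ∧
      e = (∫ x, infDist x (↑α : Set X) ^ r ∂P) ^ (1 / r)}.Nonempty := by
  obtain ⟨x⟩ := ‹Nonempty X›
  exact ⟨_, {x}, by simp, by simpa using hn, rfl⟩

lemma quantError_bddBelow (P : Measure X) (r : ℝ) (n : ℕ) :
    BddBelow {e : ℝ | ∃ α : Finset X, 1 ≤ α.card ∧ α.card ≤ n ∧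
      e = (∫ x, infDist x (↑α : Set X) ^ r ∂P) ^ (1 / r)} :=
  ⟨0, by rintro e ⟨α, -, -, rfl⟩; exact quantErrVal_nonneg P r α⟩

lemma quantError_antitone [Nonempty X] (P : Measure X) (r : ℝ) {m n : ℕ} (hm : 1 ≤ m)
    (hmn : m ≤ n) : quantError P r n ≤ quantError P r m := by
  apply csInf_le_csInf (quantError_bddBelow P r n) (quantError_set_nonempty P r hm)
  rintro e ⟨α, h1, h2, rfl⟩
  exact ⟨α, h1, h2.trans hmn, rfl⟩

/-- Integrability of the distance-power function for a measure with bounded carrier. -/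
lemma integrable_infDist_rpow (ν : Measure X) [IsFiniteMeasure ν] {K : Set X}
    (hμK : ν Kᶜ = 0) (hKb : Bornology.IsBounded K) (hKne : K.Nonempty) (α : Finset X)
    (hα : α.Nonempty) {r : ℝ} (hr : 0 < r) :
    Integrable (fun x => infDist x (↑α : Set X) ^ r) ν := by
  obtain ⟨a, ha⟩ := hα
  obtain ⟨k0, hk0⟩ := hKne
  have hcont : Continuous fun x : X => infDist x (↑α : Set X) ^ r :=
    Continuous.rpow_const (continuous_infDist_pt _) fun x => Or.inr hr.le
  obtain ⟨C, hC⟩ := hKb.subset_closedBall k0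
  apply Integrable.mono' (g := fun _ => (C + dist a k0) ^ r)
    (integrable_const _) hcont.aestronglyMeasurable
  filter_upwards [measure_eq_zero_iff_ae_notMem.mp hμK] with x hx
  have hxK : x ∈ K := not_not.mp hx
  have h1 : infDist x (↑α : Set X) ≤ dist x a := infDist_le_dist_of_mem (by simpa using ha)
  have h2 : dist x a ≤ C + dist a k0 := by
    have := hC hxK
    simp only [mem_closedBall] at this
    calc dist x a ≤ dist x k0 + dist k0 a := dist_triangle _ _ _
      _ ≤ C + dist a k0 := by rw [dist_comm k0 a]; exact add_le_add this le_rfl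
  have h0 : 0 ≤ infDist x (↑α : Set X) := infDist_nonneg
  rw [Real.norm_of_nonneg (Real.rpow_nonneg h0 _)]
  exact Real.rpow_le_rpow h0 (h1.trans h2) hr.le

/-- A compact set admits a finite closed-ball cover realizing `coverNum`. -/
lemma coverNum_set_nonempty {K : Set X} (hK : IsCompact K) {ε : ℝ} (hε : 0 < ε) :
    {n : ℕ | ∃ t : Finset X, t.card ≤ n ∧ K ⊆ ⋃ x ∈ t, closedBall x ε}.Nonempty := by
  obtain ⟨s, hsfin, hs⟩ := (totallyBounded_iff.mp hK.totallyBounded) ε hε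
  refine ⟨hsfin.toFinset.card, hsfin.toFinset, le_rfl, hs.trans ?_⟩
  refine Set.iUnion₂_mono' fun y hy => ⟨y, by simpa using hy, ball_subset_closedBall⟩

lemma exists_cover_of_coverNum {K : Set X} (hK : IsCompact K) {ε : ℝ} (hε : 0 < ε) :
    ∃ t : Finset X, t.card ≤ coverNum K ε ∧ K ⊆ ⋃ x ∈ t, closedBall x ε := by
  have := Nat.sInf_mem (coverNum_set_nonempty hK hε)
  obtain ⟨t, ht1, ht2⟩ := this
  exact ⟨t, ht1, ht2⟩

lemma one_le_coverNum {K : Set X} (hK : IsCompact K) (hne : K.Nonempty) {ε : ℝ} (hε : 0 < ε) :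
    1 ≤ coverNum K ε := by
  by_contra h
  push_neg at h
  interval_cases h' : coverNum K ε
  obtain ⟨t, ht1, ht2⟩ := exists_cover_of_coverNum hK hε
  rw [h'] at ht1
  obtain ⟨x, hx⟩ := hne
  have := ht2 hx
  simp [Finset.card_eq_zero.mp (Nat.le_zero.mp ht1)] at this

/-- If `K` has a cover by `≤ n` closed balls of radius `ε`, the quantization error is `≤ ε`. -/
lemma quantError_le_of_cover (ν : Measure X) [IsProbabilityMeasure ν] {K : Set X}
    (hμK : ν Kᶜ = 0) (hKb : Bornology.IsBounded K) (hKne : K.Nonempty)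
    {r : ℝ} (hr : 0 < r) {ε : ℝ} (hε : 0 < ε) {n : ℕ}
    (t : Finset X) (ht1 : t.Nonempty) (htn : t.card ≤ n) (ht2 : K ⊆ ⋃ x ∈ t, closedBall x ε) :
    quantError ν r n ≤ ε := by
  have hint : Integrable (fun x => infDist x (↑t : Set X) ^ r) ν :=
    integrable_infDist_rpow ν hμK hKb hKne t ht1 hr
  have hintle : (∫ x, infDist x (↑t : Set X) ^ r ∂ν) ≤ ε ^ r := by
    have : (∫ x, infDist x (↑t : Set X) ^ r ∂ν) ≤ ∫ _, ε ^ r ∂ν := by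
      apply integral_mono_ae hint (integrable_const _)
      filter_upwards [measure_eq_zero_iff_ae_notMem.mp hμK] with x hx
      have hxK : x ∈ K := not_not.mp hx
      obtain ⟨y, hy, hxy⟩ := Set.mem_iUnion₂.mp (ht2 hxK)
      have : infDist x (↑t : Set X) ≤ ε :=
        le_trans (infDist_le_dist_of_mem (by simpa using hy)) (by simpa using hxy)
      exact Real.rpow_le_rpow infDist_nonneg this hr.le
    simpa using this
  have hval : (∫ x, infDist x (↑t : Set X) ^ r ∂ν) ^ (1 / r) ≤ ε := by
    have h1 : (∫ x, infDist x (↑t : Set X) ^ r ∂ν) ^ (1 / r) ≤ (ε ^ r) ^ (1 / r) :=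
      Real.rpow_le_rpow (integral_nonneg fun x => Real.rpow_nonneg infDist_nonneg _)
        hintle (by positivity)
    have h2 : (ε ^ r) ^ (1 / r) = ε := by
      rw [← Real.rpow_mul hε.le, mul_one_div, div_self hr.ne', Real.rpow_one]
    exact h1.trans_eq h2
  refine le_trans (csInf_le (quantError_bddBelow ν r n) ?_) hval
  exact ⟨t, Finset.one_le_card.mpr ht1, htn, rfl⟩

lemma quantError_le_of_coverNum_le (ν : Measure X) [IsProbabilityMeasure ν] {K : Set X}
    (hK : IsCompact K) (hμK : ν Kᶜ = 0) (hKne : K.Nonempty)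
    {r : ℝ} (hr : 0 < r) {ε : ℝ} (hε : 0 < ε) {n : ℕ} (hn : coverNum K ε ≤ n) :
    quantError ν r n ≤ ε := by
  obtain ⟨t, ht1, ht2⟩ := exists_cover_of_coverNum hK hε
  have htne : t.Nonempty := by
    obtain ⟨x, hx⟩ := hKne
    obtain ⟨y, hy, -⟩ := Set.mem_iUnion₂.mp (ht2 hx)
    exact ⟨y, hy⟩
  exact quantError_le_of_cover ν hμK hK.isBounded hKne hr hε t htne (ht1.trans hn) ht2

lemma nonempty_of_prob_carrier (ν : Measure X) [IsProbabilityMeasure ν] {K : Set X}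
    (hμK : ν Kᶜ = 0) : K.Nonempty := by
  rcases K.eq_empty_or_nonempty with rfl | h
  · simp at hμK
  · exact h

/-- Lemma C: the upper quantization dimension is at most the upper box dimension of any
compact carrier. -/
lemma upperQuantDimE_le_upperBoxDimE (ν : Measure X) [IsProbabilityMeasure ν] {K : Set X}
    (hK : IsCompact K) (hμK : ν Kᶜ = 0) {r : ℝ} (hr : 0 < r) :
    upperQuantDimE ν r ≤ upperBoxDimE K := by
  have hKne : K.Nonempty := nonempty_of_prob_carrier ν hμK
  have : Nonempty X := ⟨hKne.some⟩
  refine le_of_forall_gt_imp_ge_of_dense fun b hb => ?_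
  rcases eq_or_ne b ⊤ with rfl | hbT
  · exact le_top
  obtain ⟨m, hm1, hm2⟩ := exists_between hb
  have hmT : m ≠ ⊤ := (hm2.trans_le le_top).ne
  set b' : ℝ := m.toReal with hb'
  set c : ℝ := b.toReal with hc
  have hb'pos : 0 < b' := ENNReal.toReal_pos (pos_of_gt hm1).ne' hmT
  have hb'c : b' < c := ENNReal.toReal_lt_toReal hmT hbT |>.mpr hm2
  have hcpos : 0 < c := hb'pos.trans hb'c
  -- extract δ from the box-dimension bound
  have hev : ∀ᶠ ε in nhdsWithin (0:ℝ) (Set.Ioi 0),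
      ENNReal.ofReal (Real.log (coverNum K ε) / (- Real.log ε)) < m :=
    eventually_lt_of_limsup_lt hm1
  have hev2 : ∀ᶠ ε in nhdsWithin (0:ℝ) (Set.Ioi 0),
      (0:ℝ) < ε ∧ ε < 1 ∧ (coverNum K ε : ℝ) ≤ ε ^ (-b') := by
    have h01 : ∀ᶠ ε in nhdsWithin (0:ℝ) (Set.Ioi 0), ε ∈ Set.Ioo (0:ℝ) 1 := by
      apply Ioo_mem_nhdsGT_of_mem; exact ⟨le_rfl, one_pos⟩
    filter_upwards [hev, h01] with ε h1 h2
    refine ⟨h2.1, h2.2, ?_⟩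
    have hlogε : 0 < - Real.log ε := by
      rw [neg_pos]; exact Real.log_neg h2.1 h2.2
    have hN1 : 1 ≤ coverNum K ε := one_le_coverNum hK hKne h2.1
    have hratio : Real.log (coverNum K ε) / (- Real.log ε) < b' := by
      by_contra hcon
      push_neg at hcon
      have : (m : ℝ≥0∞) ≤ ENNReal.ofReal (Real.log (coverNum K ε) / (- Real.log ε)) := by
        rw [← ENNReal.ofReal_toReal hmT]
        exact ENNReal.ofReal_le_ofReal hcon
      exact absurd h1 (not_lt.mpr this)
    have hlogN : Real.log (coverNum K ε) < b' * (- Real.log ε) :=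
      (div_lt_iff₀ hlogε).mp hratio
    have : (coverNum K ε : ℝ) ≤ Real.exp (b' * (- Real.log ε)) := by
      calc (coverNum K ε : ℝ) = Real.exp (Real.log (coverNum K ε)) := by
            rw [Real.exp_log (by exact_mod_cast hN1)]
        _ ≤ Real.exp (b' * (- Real.log ε)) := Real.exp_le_exp.mpr hlogN.le
    rw [Real.rpow_def_of_pos h2.1]
    refine this.trans (le_of_eq ?_)
    congr 1
    ring
  obtain ⟨δ, hδpos, hδ⟩ := Metric.mem_nhdsWithin_iff.mp hev2
  have hP : ∀ ε : ℝ, 0 < ε → ε < δ →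
      (0:ℝ) < ε ∧ ε < 1 ∧ (coverNum K ε : ℝ) ≤ ε ^ (-b') := by
    intro ε h1 h2
    refine hδ ⟨?_, h1⟩
    rw [Real.ball_eq_Ioo]
    exact ⟨by linarith, by linarith⟩
  have key : ∀ᶠ n : ℕ in atTop,
      ENNReal.ofReal (Real.log n / (-Real.log (quantError ν r n))) ≤ ENNReal.ofReal c := by
    have htend : Tendsto (fun n : ℕ => (n:ℝ) ^ (-(1/c))) atTop (nhds 0) :=
      (tendsto_rpow_neg_atTop (by positivity)).comp tendsto_natCast_atTop_atTop
    have hev3 : ∀ᶠ n : ℕ in atTop, (n:ℝ) ^ (-(1/c)) < δ :=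
      htend.eventually (gt_mem_nhds hδpos)
    filter_upwards [hev3, eventually_ge_atTop 2] with n hn h2n
    have hn1 : (1:ℝ) < (n:ℝ) := by exact_mod_cast h2n
    have hnpos : (0:ℝ) < (n:ℝ) := by linarith
    set ε : ℝ := (n:ℝ) ^ (-(1/c)) with hεdef
    have hεpos : 0 < ε := Real.rpow_pos_of_pos hnpos _
    obtain ⟨-, hε1, hNb⟩ := hP ε hεpos hn
    have hNn : coverNum K ε ≤ n := by
      have heq : ε ^ (-b') = (n:ℝ) ^ ((-(1/c)) * (-b')) :=
        (Real.rpow_mul hnpos.le _ _).symm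
      have hle1 : (-(1/c)) * (-b') ≤ 1 := by
        have : (1/c) * b' < 1 := by
          rw [one_div, inv_mul_lt_iff₀ hcpos]
          simpa using hb'c
        nlinarith
      have h2 : (n:ℝ) ^ ((-(1/c)) * (-b')) ≤ (n:ℝ) ^ (1:ℝ) :=
        Real.rpow_le_rpow_of_exponent_le hn1.le hle1
      have : (coverNum K ε : ℝ) ≤ (n:ℝ) := by
        rw [heq] at hNb
        simpa using hNb.trans h2
      exact_mod_cast this
    have hE : quantError ν r n ≤ ε := by
      rcases le_or_gt (coverNum K ε) 0 with h0 | h1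
      · exact quantError_le_of_coverNum_le ν hK hμK hKne hr hεpos (h0.trans (Nat.zero_le n))
      · refine le_trans (quantError_antitone ν r h1 hNn) ?_
        exact quantError_le_of_coverNum_le ν hK hμK hKne hr hεpos le_rfl
    apply ENNReal.ofReal_le_ofReal
    rcases eq_or_lt_of_le (quantError_nonneg ν r n) with hE0 | hEpos
    · rw [← hE0]
      simp [Real.log_zero, hcpos.le]
    · have hlogE : (1/c) * Real.log n ≤ -(Real.log (quantError ν r n)) := by
        have l1 : Real.log (quantError ν r n) ≤ Real.log ε := Real.log_le_log hEpos hE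
        have l2 : Real.log ε = (-(1/c)) * Real.log n := Real.log_rpow hnpos _
        rw [l2] at l1
        linarith
      have hlogn : 0 < Real.log n := Real.log_pos hn1
      have hden : 0 < -Real.log (quantError ν r n) :=
        lt_of_lt_of_le (by positivity) hlogE
      rw [div_le_iff₀ hden]
      calc Real.log n = c * ((1/c) * Real.log n) := by field_simp
        _ ≤ c * (-Real.log (quantError ν r n)) :=
            mul_le_mul_of_nonneg_left hlogE hcpos.le
  calc upperQuantDimE ν r ≤ ENNReal.ofReal c := limsup_le_of_le (by isBoundedDefault) key
    _ = b := ENNReal.ofReal_toReal hbT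

lemma coverNum_mono_set {A B : Set X} (hAB : A ⊆ B)
    (hB : {n : ℕ | ∃ t : Finset X, t.card ≤ n ∧ B ⊆ ⋃ x ∈ t, closedBall x ε}.Nonempty) :
    coverNum A ε ≤ coverNum B ε := by
  obtain ⟨t, ht1, ht2⟩ := Nat.sInf_mem hB
  exact Nat.sInf_le ⟨t, ht1, hAB.trans ht2⟩

lemma coverNum_closure (A : Set X) (ε : ℝ) : coverNum (closure A) ε = coverNum A ε := by
  unfold coverNum
  congr 1
  ext n
  constructor
  · rintro ⟨t, ht1, ht2⟩
    exact ⟨t, ht1, (subset_closure.trans ht2)⟩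
  · rintro ⟨t, ht1, ht2⟩
    refine ⟨t, ht1, ?_⟩
    have hcl : IsClosed (⋃ x ∈ t, closedBall x ε) :=
      t.finite_toSet.isClosed_biUnion fun i _ => isClosed_closedBall
    exact hcl.closure_subset_iff.mpr ht2

lemma upperBoxDimE_mono [ProperSpace X] {A B : Set X} (hAB : A ⊆ B)
    (hB : Bornology.IsBounded B) :
    upperBoxDimE A ≤ upperBoxDimE B := by
  refine limsup_le_limsup ?_ (by isBoundedDefault) (by isBoundedDefault)
  filter_upwards [self_mem_nhdsWithin, Ioo_mem_nhdsGT_of_mem (Set.mem_Ico.mpr ⟨le_rfl, one_pos⟩)]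
    with ε hε h01
  apply ENNReal.ofReal_le_ofReal
  have hεpos : (0:ℝ) < ε := hε
  have hnonempty : {n : ℕ | ∃ t : Finset X, t.card ≤ n ∧ B ⊆ ⋃ x ∈ t, closedBall x ε}.Nonempty := by
    obtain ⟨m, t, ht1, ht2⟩ := coverNum_set_nonempty hB.isCompact_closure hεpos
    exact ⟨m, t, ht1, subset_closure.trans ht2⟩
  have hmono := coverNum_mono_set (ε := ε) hAB hnonempty
  have hlogε : 0 < -Real.log ε := by
    rw [neg_pos]; exact Real.log_neg hεpos h01.2
  have hlog : Real.log (coverNum A ε) ≤ Real.log (coverNum B ε) := by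
    rcases Nat.eq_zero_or_pos (coverNum A ε) with h0 | hpos
    · rw [h0]
      simpa using Real.log_natCast_nonneg (coverNum B ε)
    · exact Real.log_le_log (by exact_mod_cast hpos) (Nat.cast_le.mpr hmono)
  gcongr

lemma upperBoxDimE_closure (A : Set X) : upperBoxDimE (closure A) = upperBoxDimE A := by
  unfold upperBoxDimE
  simp only [coverNum_closure]


set_option maxHeartbeats 1000000 in
/-- If `F` admits `2^k`-point covers at radius `2·2^(-kβ)`, then its upper box dimension is
at most any `θ > 1/β`. -/
lemma upperBoxDimE_le_of_covers {F : Set X} {β θ : ℝ} (hβ : 0 < β) (hθ : 1/β < θ)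
    (hcov : ∀ᶠ k : ℕ in atTop, ∃ t : Finset X, t.card ≤ 2^k ∧
      F ⊆ ⋃ x ∈ t, closedBall x (2 * Real.exp (-((k:ℝ) * β * Real.log 2)))) :
    upperBoxDimE F ≤ ENNReal.ofReal θ := by
  set R : ℕ → ℝ := fun k => 2 * Real.exp (-((k:ℝ) * β * Real.log 2)) with hR
  have hRpos : ∀ k, 0 < R k := fun k => by positivity
  have hlog2 : (0:ℝ) < Real.log 2 := Real.log_pos (by norm_num)
  have hθpos : 0 < θ := lt_trans (by positivity) hθ
  have hθβ : 1 < θ * β := by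
    rw [div_lt_iff₀ hβ] at hθ; linarith
  obtain ⟨j₀, hj₀⟩ := eventually_atTop.mp hcov
  set M : ℕ := max j₀ (Nat.ceil ((1 + θ)/(θ*β - 1))) with hM
  have hcM : ∀ k : ℕ, M ≤ k → (k:ℝ) + 1 ≤ θ * ((k:ℝ)*β - 1) := by
    intro k hk
    have h1 : ((1 + θ)/(θ*β - 1)) ≤ (k:ℝ) := by
      have : Nat.ceil ((1 + θ)/(θ*β - 1)) ≤ k := le_trans (le_max_right _ _) hk
      exact (Nat.ceil_le.mp this)
    have h2 : (1 + θ) ≤ (k:ℝ) * (θ*β - 1) := by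
      rw [div_le_iff₀ (by linarith)] at h1; linarith
    nlinarith
  have hkβ : ∀ k : ℕ, M ≤ k → 1 < (k:ℝ) * β := by
    intro k hk
    have := hcM k hk
    nlinarith [Nat.cast_nonneg (α := ℝ) k]
  have hlogR : ∀ k : ℕ, Real.log (R k) = Real.log 2 - (k:ℝ)*β*Real.log 2 := by
    intro k
    rw [hR]
    rw [Real.log_mul (by norm_num) (Real.exp_ne_zero _), Real.log_exp]
    ring
  refine limsup_le_of_le (by isBoundedDefault) ?_
  filter_upwards [Ioo_mem_nhdsGT_of_mem
    (Set.mem_Ico.mpr ⟨le_rfl, lt_min one_pos (hRpos M)⟩)] with ε hε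
  obtain ⟨hε0, hεlt⟩ := hε
  have hε1 : ε < 1 := lt_of_lt_of_le hεlt (min_le_left _ _)
  have hεM : ε ≤ R M := le_of_lt (lt_of_lt_of_le hεlt (min_le_right _ _))
  have hkey : ∀ y : ℝ, ε ≤ 2 * Real.exp (-y) ↔ y ≤ Real.log 2 - Real.log ε := by
    intro y
    rw [show (2:ℝ) * Real.exp (-y) = Real.exp (Real.log 2 - y) by
      rw [Real.exp_sub, Real.exp_log two_pos]; rw [Real.exp_neg]; ring]
    rw [← Real.log_le_iff_le_exp hε0]
    constructor <;> intro h <;> linarith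
  set G : ℝ := Real.log 2 - Real.log ε with hG
  have hGpos : 0 < G := by
    have : Real.log ε < 0 := Real.log_neg hε0 hε1
    have := hlog2
    rw [hG]; linarith
  have hRG : ∀ kk : ℕ, (ε ≤ R kk ↔ (kk:ℝ) * β * Real.log 2 ≤ G) := by
    intro kk
    rw [hR]
    exact hkey _
  set L : ℝ := G / (β * Real.log 2) with hL
  have hLG : ∀ kk : ℕ, ((kk:ℝ) ≤ L ↔ (kk:ℝ) * β * Real.log 2 ≤ G) := by
    intro kk
    rw [hL, le_div_iff₀ (by positivity)]
    constructor <;> intro h <;> nlinarith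
  have hLpos : 0 < L := by positivity
  set k : ℕ := Nat.floor L with hk
  have hkL : (k:ℝ) ≤ L := Nat.floor_le hLpos.le
  have hLk : L < (k:ℝ) + 1 := Nat.lt_floor_add_one L
  have hεRk : ε ≤ R k := (hRG k).mpr ((hLG k).mp hkL)
  have hMk : M ≤ k := Nat.le_floor ((hLG M).mpr ((hRG M).mp hεM))
  have hRk1 : R (k+1) ≤ ε := by
    by_contra hcon
    push_neg at hcon
    have := (hLG (k+1)).mpr ((hRG (k+1)).mp hcon.le)
    push_cast at this
    linarith
  -- covering at scale k+1
  obtain ⟨t, htc, hts⟩ := hj₀ (k+1) (le_trans (le_trans (le_max_left _ _) hMk) (by omega))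
  have hcov' : coverNum F ε ≤ 2^(k+1) := by
    apply Nat.sInf_le
    refine ⟨t, htc, hts.trans ?_⟩
    apply Set.iUnion₂_mono
    intro x hx
    exact closedBall_subset_closedBall hRk1
  -- ratio bound
  have hlogN : Real.log (coverNum F ε) ≤ ((k:ℝ)+1) * Real.log 2 := by
    rcases Nat.eq_zero_or_pos (coverNum F ε) with h0 | hpos
    · rw [h0]; push_cast; rw [Real.log_zero]; positivity
    · calc Real.log (coverNum F ε) ≤ Real.log ((2:ℝ)^(k+1)) := by
            apply Real.log_le_log (by exact_mod_cast hpos)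
            exact_mod_cast hcov'
        _ = ((k:ℝ)+1) * Real.log 2 := by
            rw [Real.log_pow]; push_cast; ring
  have hlogε : ((k:ℝ)*β - 1) * Real.log 2 ≤ -Real.log ε := by
    have h1 : Real.log ε ≤ Real.log (R k) := Real.log_le_log hε0 hεRk
    rw [hlogR k] at h1
    nlinarith
  have hden : 0 < ((k:ℝ)*β - 1) * Real.log 2 := by
    have := hkβ k hMk
    nlinarith
  apply ENNReal.ofReal_le_ofReal
  have hNnn : 0 ≤ Real.log (coverNum F ε) := Real.log_natCast_nonneg _
  calc Real.log (coverNum F ε) / (-Real.log ε)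
      ≤ Real.log (coverNum F ε) / (((k:ℝ)*β - 1) * Real.log 2) := by gcongr
    _ ≤ (((k:ℝ)+1) * Real.log 2) / (((k:ℝ)*β - 1) * Real.log 2) := by gcongr
    _ ≤ θ := by
        rw [div_le_iff₀ hden]
        have := hcM k hMk
        nlinarith

lemma packingDim_iUnion_le (S : ℕ → Set X) :
    packingDim (⋃ i, S i) ≤ ⨆ i, packingDim (S i) := by
  refine le_of_forall_gt_imp_ge_of_dense fun t ht => ?_
  have h : ∀ i, ∃ B : ℕ → Set X, (∀ j, Bornology.IsBounded (B j)) ∧ S i ⊆ ⋃ j, B j ∧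
      (⨆ j, upperBoxDimE (B j)) < t := by
    intro i
    have hi : packingDim (S i) < t := lt_of_le_of_lt (le_iSup (fun i => packingDim (S i)) i) ht
    rw [packingDim] at hi
    obtain ⟨d, ⟨B, hb, hsub, rfl⟩, hdt⟩ := sInf_lt_iff.mp hi
    exact ⟨B, hb, hsub, hdt⟩
  choose B hBb hBsub hBlt using h
  let e : ℕ ≃ ℕ × ℕ := (Denumerable.eqv (ℕ × ℕ)).symm
  refine le_trans (sInf_le ⟨fun n => B (e n).1 (e n).2, fun n => hBb _ _, ?_, rfl⟩) ?_
  · intro x hx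
    obtain ⟨i, hi⟩ := Set.mem_iUnion.mp hx
    obtain ⟨j, hj⟩ := Set.mem_iUnion.mp (hBsub i hi)
    refine Set.mem_iUnion.mpr ⟨e.symm (i, j), ?_⟩
    simp [e]
    convert hj using 2 <;> simp
  · refine iSup_le fun n => ?_
    exact le_of_lt (lt_of_le_of_lt (le_iSup (fun j => upperBoxDimE (B (e n).1 j)) (e n).2)
      (hBlt (e n).1))

lemma quantError_dirac [MeasurableSingletonClass X] (x₀ : X) {r : ℝ} (hr : 0 < r) (n : ℕ) :
    quantError (Measure.dirac x₀) r n = 0 := by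
  rcases Nat.eq_zero_or_pos n with rfl | hn
  · unfold quantError
    convert Real.sInf_empty
    rw [Set.eq_empty_iff_forall_notMem]
    rintro e ⟨α, h1, h2, -⟩
    omega
  · refine le_antisymm ?_ (quantError_nonneg _ _ _)
    apply csInf_le (quantError_bddBelow _ _ _)
    refine ⟨{x₀}, by simp, by simp; omega, ?_⟩
    have : (∫ x, infDist x (↑({x₀} : Finset X) : Set X) ^ r ∂(Measure.dirac x₀)) = 0 := by
      rw [integral_dirac]
      simp [Real.zero_rpow hr.ne']
    rw [this, Real.zero_rpow (by positivity)]

lemma upperQuantDimE_dirac [MeasurableSingletonClass X] (x₀ : X) {r : ℝ} (hr : 0 < r) :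
    upperQuantDimE (Measure.dirac x₀) r = 0 := by
  unfold upperQuantDimE
  have : ∀ n : ℕ, ENNReal.ofReal (Real.log n / (- Real.log (quantError (Measure.dirac x₀) r n)))
      = 0 := by
    intro n
    rw [quantError_dirac x₀ hr n]
    simp
  simp only [this]
  exact limsup_const 0

set_option maxHeartbeats 1000000 in
/-- Lemma B (Kesseböhmer–Zhu): the packing dimension of a compactly supported probability
measure is at most its upper quantization dimension. -/
lemma packingDimMeasure_le_upperQuantDimE [ProperSpace X]
    (ν : Measure X) [IsProbabilityMeasure ν] {K : Set X}
    (hK : IsCompact K) (hνK : ν Kᶜ = 0) {r : ℝ} (hr : 1 ≤ r) :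
    packingDimMeasure ν ≤ upperQuantDimE ν r := by
  have hr0 : (0:ℝ) < r := lt_of_lt_of_le one_pos hr
  have hKne : K.Nonempty := nonempty_of_prob_carrier ν hνK
  have hX : Nonempty X := ⟨hKne.some⟩
  have hlog2 : (0:ℝ) < Real.log 2 := Real.log_pos (by norm_num)
  refine le_of_forall_gt_imp_ge_of_dense fun d hd => ?_
  rcases eq_or_ne d ⊤ with rfl | hdT
  · exact le_top
  obtain ⟨m, hm1, hm2⟩ := exists_between hd
  have hmT : m ≠ ⊤ := (hm2.trans_le le_top).ne
  set c : ℝ := m.toReal with hc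
  set d' : ℝ := d.toReal with hd'
  have hcpos : 0 < c := ENNReal.toReal_pos (pos_of_gt hm1).ne' hmT
  have hcd : c < d' := ENNReal.toReal_lt_toReal hmT hdT |>.mpr hm2
  have hd'pos : 0 < d' := hcpos.trans hcd
  set δ : ℝ := (d' - c)/(2*c*d') with hδ
  have hδpos : 0 < δ := by rw [hδ]; exact div_pos (by linarith) (by positivity)
  set β : ℝ := 1/c - δ with hβ
  have hβval : β = (d' + c)/(2*c*d') := by rw [hβ, hδ]; field_simp; ring
  have hβpos : 0 < β := by rw [hβval]; positivity
  have hηd : 1/β < d' := by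
    rw [hβval]
    rw [div_div_eq_mul_div, one_mul, div_lt_iff₀ (by positivity)]
    nlinarith
  set θ : ℝ := (1/β + d')/2 with hθ
  have hθ1 : 1/β < θ := by rw [hθ]; linarith
  have hθ2 : θ < d' := by rw [hθ]; linarith
  -- Step 1 : eventual decay of quantization errors along powers of two
  have hE : ∀ᶠ k : ℕ in atTop,
      quantError ν r (2^k) ≤ Real.exp (-((k:ℝ)/c * Real.log 2)) := by
    have hu : ∀ᶠ n : ℕ in atTop,
        ENNReal.ofReal (Real.log n / (- Real.log (quantError ν r n))) < m :=
      eventually_lt_of_limsup_lt hm1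
    have h2k : Tendsto (fun k : ℕ => 2^k) atTop atTop :=
      tendsto_pow_atTop_atTop_of_one_lt (by norm_num)
    have hsmall : ∀ᶠ n : ℕ in atTop, quantError ν r n ≤ 1/2 :=
      eventually_atTop.mpr ⟨coverNum K (1/2), fun n hn =>
        quantError_le_of_coverNum_le ν hK hνK hKne hr0 (by norm_num) hn⟩
    filter_upwards [h2k.eventually hu, h2k.eventually hsmall] with k hk1 hk2
    set E : ℝ := quantError ν r (2^k) with hEdef
    rcases eq_or_lt_of_le (quantError_nonneg ν r (2^k)) with hE0 | hEpos
    · rw [hEdef, ← hE0]; positivity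
    · have hE12 : E ≤ 1/2 := hk2
      have hlogE : Real.log E ≤ -Real.log 2 := by
        calc Real.log E ≤ Real.log (1/2) := Real.log_le_log hEpos hE12
          _ = -Real.log 2 := by rw [one_div, Real.log_inv]
      have hlogn : Real.log ((2^k : ℕ) : ℝ) = (k:ℝ) * Real.log 2 := by
        push_cast
        rw [Real.log_pow]
      have hratio : Real.log ((2^k : ℕ) : ℝ) / (-Real.log E) < c := by
        by_contra hcon
        push_neg at hcon
        refine absurd hk1 (not_lt.mpr ?_)
        rw [← ENNReal.ofReal_toReal hmT]
        exact ENNReal.ofReal_le_ofReal hcon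
      have hden : 0 < -Real.log E := by linarith
      rw [div_lt_iff₀ hden, hlogn] at hratio
      have hlt : Real.log E < -((k:ℝ)/c * Real.log 2) := by
        rw [div_mul_eq_mul_div, ← neg_div, lt_div_iff₀ hcpos]
        nlinarith [hratio]
      calc E = Real.exp (Real.log E) := (Real.exp_log hEpos).symm
        _ ≤ Real.exp (-((k:ℝ)/c * Real.log 2)) := Real.exp_le_exp.mpr hlt.le
  -- Step 2 : choose near-optimal codebooks
  have hα : ∀ k : ℕ, ∃ α : Finset X, (1 ≤ α.card ∧ α.card ≤ 2^k) ∧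
      (∫ x, infDist x (↑α : Set X) ^ r ∂ν) ^ (1/r)
        < quantError ν r (2^k) + Real.exp (-((k:ℝ)/c * Real.log 2)) := by
    intro k
    have hne := quantError_set_nonempty ν r (n := 2^k) (Nat.one_le_two_pow)
    obtain ⟨e, ⟨αk, h1, h2, rfl⟩, hlt⟩ := Real.lt_sInf_add_pos hne
      (Real.exp_pos (-((k:ℝ)/c * Real.log 2)))
    exact ⟨αk, ⟨h1, h2⟩, hlt⟩
  choose α hαcard hαval using hα
  set R : ℕ → ℝ := fun k => 2 * Real.exp (-((k:ℝ) * β * Real.log 2)) with hR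
  have hRpos : ∀ k, 0 < R k := fun k => by positivity
  -- Step 3 : Markov inequality bound
  have hMarkov : ∀ᶠ k : ℕ in atTop,
      ν {x | R k < infDist x (↑(α k) : Set X)} ≤
        (ENNReal.ofReal (Real.exp (-(δ * r * Real.log 2)))) ^ k := by
    filter_upwards [hE] with k hEk
    have hαne : (α k).Nonempty := Finset.card_pos.mp (hαcard k).1
    have hint : Integrable (fun x => infDist x (↑(α k) : Set X) ^ r) ν :=
      integrable_infDist_rpow ν hνK hK.isBounded hKne (α k) hαne hr0
    have hnn : (0:X → ℝ) ≤ᶠ[ae ν] fun x => infDist x (↑(α k) : Set X) ^ r :=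
      Filter.Eventually.of_forall fun x => Real.rpow_nonneg infDist_nonneg r
    have hmm := mul_meas_ge_le_integral_of_nonneg hnn hint ((R k)^r)
    set V : ℝ := 2 * Real.exp (-((k:ℝ)/c * Real.log 2)) with hV
    have hVpos : 0 < V := by positivity
    have hInn : 0 ≤ ∫ x, infDist x (↑(α k) : Set X) ^ r ∂ν :=
      integral_nonneg fun x => Real.rpow_nonneg infDist_nonneg r
    have hIv : (∫ x, infDist x (↑(α k) : Set X) ^ r ∂ν) ≤ V ^ r := by
      have hvV : (∫ x, infDist x (↑(α k) : Set X) ^ r ∂ν) ^ (1/r) ≤ V := by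
        refine le_trans (hαval k).le ?_
        rw [hV]
        have := hEk
        linarith
      calc (∫ x, infDist x (↑(α k) : Set X) ^ r ∂ν)
          = ((∫ x, infDist x (↑(α k) : Set X) ^ r ∂ν) ^ (1/r)) ^ r := by
            rw [← Real.rpow_mul hInn, one_div, inv_mul_cancel₀ hr0.ne', Real.rpow_one]
        _ ≤ V ^ r := Real.rpow_le_rpow (Real.rpow_nonneg hInn _) hvV hr0.le
    have hTle : ((R k)^r) * (ν {x | (R k)^r ≤ infDist x (↑(α k) : Set X) ^ r}).toReal
        ≤ V ^ r := le_trans hmm hIv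
    have hRr : 0 < (R k)^r := Real.rpow_pos_of_pos (hRpos k) r
    have hT2 : (ν {x | (R k)^r ≤ infDist x (↑(α k) : Set X) ^ r}).toReal
        ≤ (V / R k) ^ r := by
      rw [Real.div_rpow hVpos.le (hRpos k).le]
      rw [le_div_iff₀ hRr]
      linarith [hTle]
    have hVR : (V / R k) ^ r = Real.exp (-(δ * r * Real.log 2)) ^ k := by
      have h1 : V / R k = Real.exp (-((k:ℝ) * δ * Real.log 2)) := by
        rw [hV, hR]
        rw [mul_div_mul_left _ _ (two_ne_zero)]
        rw [← Real.exp_sub]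
        congr 1
        rw [hβ]
        field_simp
        ring
      rw [h1, ← Real.exp_mul, ← Real.exp_nat_mul]
      congr 1
      ring
    have hsub : {x | R k < infDist x (↑(α k) : Set X)} ⊆
        {x | (R k)^r ≤ infDist x (↑(α k) : Set X) ^ r} := by
      intro x hx
      exact Real.rpow_le_rpow (hRpos k).le (le_of_lt hx) hr0.le
    calc ν {x | R k < infDist x (↑(α k) : Set X)}
        ≤ ν {x | (R k)^r ≤ infDist x (↑(α k) : Set X) ^ r} := measure_mono hsub
      _ ≤ ENNReal.ofReal ((V / R k) ^ r) := by
          rw [ENNReal.le_ofReal_iff_toReal_le (measure_ne_top ν _)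
            (by positivity)]
          exact hT2
      _ = (ENNReal.ofReal (Real.exp (-(δ * r * Real.log 2)))) ^ k := by
          rw [hVR, ENNReal.ofReal_pow (Real.exp_pos _).le]
  obtain ⟨k₀, hk₀⟩ := eventually_atTop.mp hMarkov
  -- Step 4 : the exhausting sets
  set F : ℕ → Set X := fun j => K ∩ ⋂ (k : ℕ) (_ : j ≤ k), {x | infDist x (↑(α k) : Set X) ≤ R k}
    with hF
  have hFmeas : ∀ j, MeasurableSet (F j) := by
    intro j
    apply MeasurableSet.inter hK.isClosed.measurableSet
    refine MeasurableSet.iInter fun k => MeasurableSet.iInter fun _ => ?_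
    exact (isClosed_le (continuous_infDist_pt _) continuous_const).measurableSet
  have hFbounded : ∀ j, Bornology.IsBounded (F j) :=
    fun j => hK.isBounded.subset (Set.inter_subset_left)
  have hFmono : Monotone F := by
    intro j j' hjj'
    apply Set.inter_subset_inter_right
    exact Set.iInter₂_mono' fun k hk => ⟨k, hjj'.trans hk, subset_rfl⟩
  set A : Set X := ⋃ j, F j with hA
  have hAmeas : MeasurableSet A := MeasurableSet.iUnion hFmeas
  -- Step 5 : A has full measure
  have hA1 : ν A = 1 := by
    set ρ : ℝ≥0∞ := ENNReal.ofReal (Real.exp (-(δ * r * Real.log 2))) with hρ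
    have hρ1 : ρ < 1 := by
      rw [hρ]
      apply ENNReal.ofReal_lt_one.mpr
      apply Real.exp_lt_one_iff.mpr
      have : 0 < δ * r * Real.log 2 := by positivity
      linarith
    have hcomplF : ∀ j, ν ((F j)ᶜ) ≤ ∑' i : ℕ, ν {x | R (j+i) < infDist x (↑(α (j+i)) : Set X)} := by
      intro j
      have hsub : (F j)ᶜ ⊆ Kᶜ ∪ ⋃ i : ℕ, {x | R (j+i) < infDist x (↑(α (j+i)) : Set X)} := by
        intro x hx
        rw [hF] at hx
        simp only [Set.mem_compl_iff, Set.mem_inter_iff, not_and] at hx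
        by_cases hxK : x ∈ K
        · specialize hx hxK
          simp only [Set.mem_iInter, not_forall, Set.mem_setOf_eq, not_le] at hx
          obtain ⟨k, hk, hgt⟩ := hx
          refine Or.inr (Set.mem_iUnion.mpr ⟨k - j, ?_⟩)
          have : j + (k - j) = k := by omega
          rw [this]
          exact hgt
        · exact Or.inl hxK
      calc ν ((F j)ᶜ) ≤ ν Kᶜ + ν (⋃ i : ℕ, {x | R (j+i) < infDist x (↑(α (j+i)) : Set X)}) :=
            le_trans (measure_mono hsub) (measure_union_le _ _)
        _ ≤ 0 + ∑' i : ℕ, ν {x | R (j+i) < infDist x (↑(α (j+i)) : Set X)} := by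
            rw [hνK]
            exact add_le_add le_rfl (measure_iUnion_le _)
        _ = _ := by rw [zero_add]
    have hbound : ∀ j, k₀ ≤ j → ν ((F j)ᶜ) ≤ ρ^j * (1 - ρ)⁻¹ := by
      intro j hj
      refine le_trans (hcomplF j) ?_
      calc ∑' i : ℕ, ν {x | R (j+i) < infDist x (↑(α (j+i)) : Set X)}
          ≤ ∑' i : ℕ, ρ^(j+i) := by
            apply ENNReal.tsum_le_tsum
            intro i
            exact hk₀ (j+i) (le_trans hj (Nat.le_add_right _ _))
        _ = ρ^j * ∑' i : ℕ, ρ^i := by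
            rw [← ENNReal.tsum_mul_left]
            congr 1
            ext i
            rw [pow_add]
        _ = ρ^j * (1 - ρ)⁻¹ := by rw [ENNReal.tsum_geometric]
    have hAc : ∀ j, ν Aᶜ ≤ ν ((F j)ᶜ) := by
      intro j
      apply measure_mono
      apply Set.compl_subset_compl.mpr
      exact Set.subset_iUnion F j
    have htend : Tendsto (fun j : ℕ => ρ^j * (1 - ρ)⁻¹) atTop (nhds 0) := by
      have h1 : Tendsto (fun j : ℕ => ρ^j) atTop (nhds 0) :=
        ENNReal.tendsto_pow_atTop_nhds_zero_of_lt_one hρ1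
      have h2 : (1 - ρ)⁻¹ ≠ ⊤ := by
        rw [Ne, ENNReal.inv_eq_top, tsub_eq_zero_iff_le]
        exact not_le.mpr hρ1
      have := ENNReal.Tendsto.mul_const h1 (Or.inr h2)
      simpa using this
    have hA0 : ν Aᶜ = 0 := by
      have hle : ν Aᶜ ≤ 0 := by
        refine ge_of_tendsto htend ?_
        filter_upwards [eventually_ge_atTop k₀] with j hj
        exact le_trans (hAc j) (hbound j hj)
      exact le_antisymm hle zero_le
    have := measure_add_measure_compl hAmeas (μ := ν)
    rw [hA0, add_zero] at this
    rw [this]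
    exact measure_univ
  -- Step 6 : box dimension bounds
  have hFdim : ∀ j, upperBoxDimE (F j) ≤ ENNReal.ofReal θ := by
    intro j
    apply upperBoxDimE_le_of_covers hβpos hθ1
    rw [eventually_atTop]
    refine ⟨j, fun k hk => ⟨α k, (hαcard k).2, ?_⟩⟩
    intro x hx
    rw [hF] at hx
    obtain ⟨hxK, hxI⟩ := hx
    have hxk : infDist x (↑(α k) : Set X) ≤ R k := by
      simp only [Set.mem_iInter] at hxI
      exact hxI k hk
    have hαne : (α k).Nonempty := Finset.card_pos.mp (hαcard k).1
    obtain ⟨y, hy, hxy⟩ := ((α k).finite_toSet.isCompact).exists_infDist_eq_dist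
      (by exact_mod_cast hαne) x
    refine Set.mem_iUnion₂.mpr ⟨y, by exact_mod_cast hy, ?_⟩
    rw [mem_closedBall]
    rw [hxy] at hxk
    exact hxk
  -- Conclusion
  have hpack : packingDim A ≤ ENNReal.ofReal θ := by
    refine le_trans (sInf_le ⟨F, hFbounded, le_of_eq rfl, rfl⟩) (iSup_le hFdim)
  refine le_trans (sInf_le ⟨A, hAmeas, hA1, rfl⟩) (hpack.trans ?_)
  calc ENNReal.ofReal θ ≤ ENNReal.ofReal d.toReal := ENNReal.ofReal_le_ofReal hθ2.le
    _ = d := ENNReal.ofReal_toReal hdT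
end Aux

/-- for `r ∈ [1,∞)` and a compactly supported Borel probability measure `μ` on
`ℝ^q`, the packing dimension of `μ` equals the infimum of `sup_{i∈ℕ} D̄_r(μ_i)` over all
countable decompositions `μ = Σ_{i∈ℕ} s_i μ_i` into compactly supported Borel probability
measures with positive weights. -/
theorem packingDimMeasure_eq_countably_stabilized_upperQuantDim (q : ℕ) (r : ℝ) (hr : 1 ≤ r)
    (μ : Measure (EuclideanSpace ℝ (Fin q))) [IsProbabilityMeasure μ]
    (K : Set (EuclideanSpace ℝ (Fin q))) (hK : IsCompact K) (hμK : μ Kᶜ = 0) :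
    packingDimMeasure μ = sInf {d : ℝ≥0∞ |
      ∃ (s : ℕ → ℝ) (ν : ℕ → Measure (EuclideanSpace ℝ (Fin q))),
        (∀ i, 0 < s i) ∧ (∀ i, IsProbabilityMeasure (ν i)) ∧
        (∀ i, ∃ Ki : Set (EuclideanSpace ℝ (Fin q)), IsCompact Ki ∧ ν i Kiᶜ = 0) ∧
        μ = Measure.sum (fun i => ENNReal.ofReal (s i) • ν i) ∧
        d = ⨆ i, upperQuantDimE (ν i) r} := by
  refine le_antisymm (le_sInf ?_) ?_
  · -- packingDimMeasure μ ≤ every decomposition value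
    rintro d ⟨s, ν, hs, hνprob, hνcarrier, hsum, rfl⟩
    refine le_of_forall_gt_imp_ge_of_dense fun t ht => ?_
    have hi : ∀ i, packingDimMeasure (ν i) < t := by
      intro i
      haveI := hνprob i
      obtain ⟨Ki, hKi, hνKi⟩ := hνcarrier i
      refine lt_of_le_of_lt (le_trans
        (packingDimMeasure_le_upperQuantDimE (ν i) hKi hνKi hr) ?_) ht
      exact le_iSup (fun i => upperQuantDimE (ν i) r) i
    have hex : ∀ i, ∃ A : Set (EuclideanSpace ℝ (Fin q)), MeasurableSet A ∧ ν i A = 1 ∧ packingDim A < t := by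
      intro i
      obtain ⟨dd, ⟨A, hmeas, h1, rfl⟩, hlt⟩ := sInf_lt_iff.mp (hi i)
      exact ⟨A, hmeas, h1, hlt⟩
    choose A hAmeas hA1 hAlt using hex
    set U : Set (EuclideanSpace ℝ (Fin q)) := ⋃ i, A i with hU
    have hUmeas : MeasurableSet U := MeasurableSet.iUnion hAmeas
    have hμU : μ U = 1 := by
      have hcompl : μ Uᶜ = 0 := by
        rw [hsum, Measure.sum_apply _ hUmeas.compl]
        have : ∀ i, (ENNReal.ofReal (s i) • ν i) Uᶜ = 0 := by
          intro i
          haveI := hνprob i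
          have hAc : ν i (A i)ᶜ = 0 :=
            (prob_compl_eq_zero_iff (hAmeas i)).mpr (hA1 i)
          have hsub : ν i Uᶜ = 0 :=
            measure_mono_null (Set.compl_subset_compl.mpr (Set.subset_iUnion A i)) hAc
          simp [hsub]
        simp [this]
      have := measure_add_measure_compl (μ := μ) hUmeas
      rw [hcompl, add_zero] at this
      rw [this]; exact measure_univ
    refine le_trans (sInf_le ⟨U, hUmeas, hμU, rfl⟩) ?_
    refine le_trans (packingDim_iUnion_le A) ?_
    exact iSup_le fun i => (hAlt i).le
  · -- construct a decomposition from a near-optimal packing cover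
    have hKne : K.Nonempty := nonempty_of_prob_carrier μ hμK
    refine le_of_forall_gt_imp_ge_of_dense fun p hp => ?_
    obtain ⟨dd, ⟨A, hAmeas, hA1, rfl⟩, hAlt⟩ := sInf_lt_iff.mp hp
    obtain ⟨d0, ⟨B, hBb, hBsub, rfl⟩, hBlt⟩ := sInf_lt_iff.mp hAlt
    set T : ℝ≥0∞ := ⨆ i, upperBoxDimE (B i) with hT
    set C : ℕ → Set (EuclideanSpace ℝ (Fin q)) := fun i => (A ∩ K) ∩ closure (B i) with hC
    have hCmeas : ∀ i, MeasurableSet (C i) :=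
      fun i => (hAmeas.inter hK.isClosed.measurableSet).inter isClosed_closure.measurableSet
    set E : ℕ → Set (EuclideanSpace ℝ (Fin q)) := disjointed C with hE
    have hEmeas : ∀ i, MeasurableSet (E i) := MeasurableSet.disjointed hCmeas
    have hdisj : Pairwise (Function.onFun Disjoint E) := disjoint_disjointed C
    have hEsub : ∀ i, E i ⊆ C i := fun i => disjointed_subset C i
    have hUE : (⋃ i, E i) = ⋃ i, C i := iUnion_disjointed
    have hAKsub : A ∩ K ⊆ ⋃ i, C i := by
      intro x hx
      obtain ⟨i, hi⟩ := Set.mem_iUnion.mp (hBsub hx.1)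
      exact Set.mem_iUnion.mpr ⟨i, hx, subset_closure hi⟩
    have hμAK : μ (A ∩ K) = 1 := by
      have h1 : μ (A ∩ K)ᶜ = 0 := by
        rw [Set.compl_inter]
        refine measure_union_null ?_ hμK
        exact (prob_compl_eq_zero_iff hAmeas).mpr hA1
      exact (prob_compl_eq_zero_iff (hAmeas.inter hK.isClosed.measurableSet)).mp h1
    have hμUE : μ (⋃ i, E i) = 1 := by
      refine le_antisymm prob_le_one ?_
      rw [hUE, ← hμAK]
      exact measure_mono hAKsub
    have hbase : μ = Measure.sum (fun i => μ.restrict (E i)) := by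
      rw [← Measure.restrict_iUnion hdisj hEmeas]
      have hae : ∀ᵐ x ∂μ, x ∈ ⋃ i, E i := by
        rw [ae_iff]
        have h0 := (prob_compl_eq_zero_iff (MeasurableSet.iUnion hEmeas)).mpr hμUE
        simpa [Set.compl_def] using h0
      exact (Measure.restrict_eq_self_of_ae_mem hae).symm
    set c : ℕ → ℝ≥0∞ := fun i => μ (E i) with hc
    have hcne : ∀ i, c i ≠ ⊤ := fun i => measure_ne_top μ _
    have hcsum : ∑' i, c i = 1 := by
      rw [hc, ← measure_iUnion hdisj hEmeas, hμUE]
    obtain ⟨i₀, hi₀⟩ : ∃ i₀, c i₀ ≠ 0 := by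
      by_contra hcon
      push_neg at hcon
      rw [tsum_congr hcon] at hcsum
      simp at hcsum
    set x₀ : EuclideanSpace ℝ (Fin q) := hKne.some with hx₀
    set ρ : ℕ → Measure (EuclideanSpace ℝ (Fin q)) := fun i =>
      if h : c i ≠ 0 then (c i)⁻¹ • μ.restrict (E i) else Measure.dirac x₀ with hρ
    have hρprob : ∀ i, IsProbabilityMeasure (ρ i) := by
      intro i
      simp only [hρ]
      by_cases h : c i ≠ 0
      · rw [dif_pos h]
        constructor
        rw [Measure.smul_apply, Measure.restrict_apply_univ, smul_eq_mul]
        exact ENNReal.inv_mul_cancel h (hcne i)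
      · rw [dif_neg h]
        infer_instance
    have hρcarrier : ∀ i, ∃ Ki : Set (EuclideanSpace ℝ (Fin q)), IsCompact Ki ∧ ρ i Kiᶜ = 0 := by
      intro i
      by_cases h : c i ≠ 0
      · refine ⟨closure (E i), ?_, ?_⟩
        · apply isCompact_of_isClosed_isBounded isClosed_closure
          apply Bornology.IsBounded.closure
          exact ((hBb i).closure.subset ((hEsub i).trans Set.inter_subset_right))
        · simp only [hρ]; rw [dif_pos h, Measure.smul_apply, Measure.restrict_apply
            isClosed_closure.measurableSet.compl]
          have : (closure (E i))ᶜ ∩ E i = ∅ := by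
            rw [Set.eq_empty_iff_forall_notMem]
            rintro x ⟨hx1, hx2⟩
            exact hx1 (subset_closure hx2)
          rw [this]
          simp
      · refine ⟨{x₀}, isCompact_singleton, ?_⟩
        simp only [hρ]; rw [dif_neg h]
        simp [Measure.dirac_apply' _ (measurableSet_singleton x₀).compl]
    have hρdim : ∀ i, upperQuantDimE (ρ i) r ≤ T := by
      intro i
      by_cases h : c i ≠ 0
      · haveI := hρprob i
        have hcar : ρ i (closure (E i))ᶜ = 0 := by
          simp only [hρ]; rw [dif_pos h, Measure.smul_apply, Measure.restrict_apply
            isClosed_closure.measurableSet.compl]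
          have : (closure (E i))ᶜ ∩ E i = ∅ := by
            rw [Set.eq_empty_iff_forall_notMem]
            rintro x ⟨hx1, hx2⟩
            exact hx1 (subset_closure hx2)
          rw [this]; simp
        have hcomp : IsCompact (closure (E i)) := by
          apply isCompact_of_isClosed_isBounded isClosed_closure
          exact ((hBb i).closure.subset ((hEsub i).trans Set.inter_subset_right)).closure
        have h1 : upperQuantDimE (ρ i) r ≤ upperBoxDimE (closure (E i)) := by
          have : ρ i = (fun _ => ρ i) i := rfl
          exact upperQuantDimE_le_upperBoxDimE (ρ i) hcomp hcar (lt_of_lt_of_le one_pos hr)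
        refine h1.trans ?_
        have h2 : closure (E i) ⊆ closure (B i) :=
          closure_minimal ((hEsub i).trans Set.inter_subset_right) isClosed_closure
        refine le_trans (upperBoxDimE_mono h2 (hBb i).closure) ?_
        rw [upperBoxDimE_closure]
        exact le_iSup (fun i => upperBoxDimE (B i)) i
      · simp only [hρ]; rw [dif_neg h]
        rw [upperQuantDimE_dirac x₀ (lt_of_lt_of_le one_pos hr)]
        exact zero_le
    -- reindex into an everywhere-positive decomposition
    have hi2ne0 : ((2:ℝ≥0∞))⁻¹ ≠ 0 := ENNReal.inv_ne_zero.mpr ENNReal.ofNat_ne_top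
    have hi2neT : ((2:ℝ≥0∞))⁻¹ ≠ ⊤ := ENNReal.inv_ne_top.mpr two_ne_zero
    set z : ℝ≥0∞ := ∑' a : ℕ, (if c a = 0 then ((2:ℝ≥0∞)⁻¹)^(a+2) else 0) with hz
    have hgeom : ∑' b : ℕ, ((2:ℝ≥0∞)⁻¹)^(b+1) = 1 := by
      calc ∑' b : ℕ, ((2:ℝ≥0∞)⁻¹)^(b+1) = ∑' b : ℕ, ((2:ℝ≥0∞)⁻¹)^b * 2⁻¹ := by
            apply tsum_congr; intro b; rw [pow_succ]
        _ = (∑' b : ℕ, ((2:ℝ≥0∞)⁻¹)^b) * 2⁻¹ := ENNReal.tsum_mul_right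
        _ = (1 - 2⁻¹)⁻¹ * 2⁻¹ := by rw [ENNReal.tsum_geometric]
        _ = 1 := by
            rw [ENNReal.one_sub_inv_two]
            exact ENNReal.inv_mul_cancel hi2ne0 hi2neT
    have hzle : z ≤ 2⁻¹ := by
      rw [hz]
      calc ∑' a : ℕ, (if c a = 0 then ((2:ℝ≥0∞)⁻¹)^(a+2) else 0)
          ≤ ∑' a : ℕ, ((2:ℝ≥0∞)⁻¹)^(a+2) :=
            ENNReal.tsum_le_tsum fun a => by split <;> simp
        _ = ∑' a : ℕ, ((2:ℝ≥0∞)⁻¹)^(a+1) * 2⁻¹ := by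
            apply tsum_congr; intro a
            rw [show a+2 = (a+1)+1 by omega, pow_succ]
        _ = (∑' a : ℕ, ((2:ℝ≥0∞)⁻¹)^(a+1)) * 2⁻¹ := ENNReal.tsum_mul_right
        _ = 2⁻¹ := by rw [hgeom, one_mul]
    have hz1 : z < 1 := lt_of_le_of_lt hzle (by
      rw [ENNReal.inv_lt_one]
      exact ENNReal.one_lt_two)
    have h1zne0 : (1:ℝ≥0∞) - z ≠ 0 := by
      rw [Ne, tsub_eq_zero_iff_le]
      exact not_le.mpr hz1
    have h1zneT : (1:ℝ≥0∞) - z ≠ ⊤ := (lt_of_le_of_lt tsub_le_self ENNReal.one_lt_top).ne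
    set W : ℕ → ℝ≥0∞ := fun a =>
      if c a ≠ 0 then (if a = i₀ then (1-z) * c i₀ else c a) else ((2:ℝ≥0∞)⁻¹)^(a+2) * c i₀
      with hW
    have hWne0 : ∀ a, W a ≠ 0 := by
      intro a
      simp only [hW]
      split_ifs with h1 h2
      · exact mul_ne_zero h1zne0 hi₀
      · exact h1
      · exact mul_ne_zero (pow_ne_zero _ hi2ne0) hi₀
    have hWneT : ∀ a, W a ≠ ⊤ := by
      intro a
      simp only [hW]
      split_ifs with h1 h2
      · exact ENNReal.mul_ne_top h1zneT (hcne i₀)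
      · exact hcne a
      · exact ENNReal.mul_ne_top (ENNReal.pow_ne_top hi2neT) (hcne i₀)
    set D : ℕ × ℕ → ℝ≥0∞ := fun pr => ((2:ℝ≥0∞)⁻¹)^(pr.2+1) * W pr.1 with hD
    set hfun : ℕ × ℕ → ℕ := fun pr => if c pr.1 ≠ 0 then pr.1 else i₀ with hhfun
    set e : ℕ ≃ ℕ × ℕ := (Denumerable.eqv (ℕ × ℕ)).symm with he
    have hDne0 : ∀ pr, D pr ≠ 0 := fun pr =>
      mul_ne_zero (pow_ne_zero _ hi2ne0) (hWne0 _)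
    have hDneT : ∀ pr, D pr ≠ ⊤ := fun pr =>
      ENNReal.mul_ne_top (ENNReal.pow_ne_top hi2neT) (hWneT _)
    refine le_trans (sInf_le ⟨fun n => (D (e n)).toReal, fun n => ρ (hfun (e n)),
      fun n => ENNReal.toReal_pos (hDne0 _) (hDneT _),
      fun n => hρprob _, fun n => hρcarrier _, ?_, rfl⟩)
      (le_trans (iSup_le fun n => hρdim (hfun (e n))) hBlt.le)
    -- the measure identity
    refine Measure.ext fun s' hs' => ?_
    rw [Measure.sum_apply _ hs']
    have hstep1 : ∑' n : ℕ, (ENNReal.ofReal ((D (e n)).toReal) • ρ (hfun (e n))) s'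
        = ∑' pr : ℕ × ℕ, D pr * ρ (hfun pr) s' := by
      rw [← Equiv.tsum_eq e (fun pr => D pr * ρ (hfun pr) s')]
      apply tsum_congr
      intro n
      rw [Measure.smul_apply, smul_eq_mul, ENNReal.ofReal_toReal (hDneT _)]
    rw [hstep1]
    set X0 : ℝ≥0∞ := c i₀ * ρ i₀ s' with hX0
    have hstep2 : ∑' pr : ℕ × ℕ, D pr * ρ (hfun pr) s'
        = ∑' a : ℕ, W a * ρ (hfun (a, 0)) s' := by
      rw [ENNReal.tsum_prod']
      apply tsum_congr
      intro a
      calc ∑' b : ℕ, D (a, b) * ρ (hfun (a, b)) s'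
          = ∑' b : ℕ, ((2:ℝ≥0∞)⁻¹)^(b+1) * (W a * ρ (hfun (a, 0)) s') := by
            apply tsum_congr
            intro b
            simp only [hD]
            rw [mul_assoc]
        _ = (∑' b : ℕ, ((2:ℝ≥0∞)⁻¹)^(b+1)) * (W a * ρ (hfun (a, 0)) s') :=
            ENNReal.tsum_mul_right
        _ = W a * ρ (hfun (a, 0)) s' := by rw [hgeom, one_mul]
    rw [hstep2]
    set f : ℕ → ℝ≥0∞ := fun a => if c a ≠ 0 ∧ a ≠ i₀ then c a * ρ a s' else 0 with hf
    have hQ : ∀ a : ℕ, W a * ρ (hfun (a, 0)) s'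
        = f a + ((if a = i₀ then (1-z) * X0 else 0)
          + (if c a = 0 then ((2:ℝ≥0∞)⁻¹)^(a+2) else 0) * X0) := by
      intro a
      by_cases h1 : c a = 0
      · have ha : a ≠ i₀ := by rintro rfl; exact hi₀ h1
        simp only [hW, hhfun, hf, hX0, h1, ha]
        simp
        ring
      · by_cases h2 : a = i₀
        · subst h2
          simp only [hW, hhfun, hf, hX0, h1]
          simp [h1]
          ring
        · simp only [hW, hhfun, hf, hX0, h1, h2]
          simp [h1, h2]
    have hg : ∀ a : ℕ, c a * ρ a s' = f a + (if a = i₀ then X0 else 0) := by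
      intro a
      by_cases h1 : c a = 0
      · have ha : a ≠ i₀ := by rintro rfl; exact hi₀ h1
        simp only [hf, hX0, h1, ha]
        simp
      · by_cases h2 : a = i₀
        · subst h2
          simp only [hf, hX0, h1]
          simp [h1]
        · simp only [hf, hX0, h1, h2]
          simp [h1, h2]
    have hstep3 : ∑' a : ℕ, W a * ρ (hfun (a, 0)) s' = ∑' a : ℕ, c a * ρ a s' := by
      rw [tsum_congr hQ, tsum_congr hg]
      rw [ENNReal.tsum_add, ENNReal.tsum_add, ENNReal.tsum_add]
      congr 1
      rw [ENNReal.tsum_mul_right, tsum_ite_eq, tsum_ite_eq]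
      rw [← hz, ← add_mul, tsub_add_cancel_of_le hz1.le, one_mul]
    rw [hstep3]
    have hstep4 : ∀ a : ℕ, c a * ρ a s' = μ.restrict (E a) s' := by
      intro a
      by_cases h1 : c a ≠ 0
      · simp only [hρ]
        rw [dif_pos h1, Measure.smul_apply, smul_eq_mul, ← mul_assoc,
          ENNReal.mul_inv_cancel h1 (hcne a), one_mul]
      · push_neg at h1
        rw [h1, zero_mul, Measure.restrict_apply hs']
        exact (measure_mono_null Set.inter_subset_right h1).symm
    rw [tsum_congr hstep4, ← Measure.sum_apply _ hs', ← hbase]
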